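/- Let a and b be distinct primes with (a,b) ≠ (2,3). Then the only positive integer triple x ≥ y ≥ z with x + y + z = 2ab + a and xyz = a³b² is {x,y,z} = {ab, ab, a}; i.e., K_{ab,ab,a} is S-determined. Moreover for (a,b) = (2,3), the triple (8,3,3) gives a second solution, so K_{6,6,2} and K_{8,3,3} are Seidel cospectral. -/

import Mathlib

open Polynomial Matrix

open scoped Classical in
/-- The Seidel matrix of a simple graph: 0 on the diagonal, -1 for adjacent pairs,
1 for distinct non-adjacent pairs. -/
noncomputable def seidel {V : Type*} [Fintype V] (G : SimpleGraph V) : Matrix V V ℝ :=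
  fun i j => if i = j then 0 else if G.Adj i j then -1 else 1

/-- The complete multipartite graph with parts of sizes `p 0, ..., p (k-1)`. -/
def completeMultipartite {k : ℕ} (p : Fin k → ℕ) : SimpleGraph (Σ i : Fin k, Fin (p i)) where
  Adj u v := u.1 ≠ v.1
  symm := ⟨fun _ _ h => h.symm⟩
  loopless := ⟨fun _ h => h rfl⟩

/-! ### Auxiliary number theory -/


private lemma bpow {a b t : ℕ} (ha : a.Prime) (hb : b.Prime)
    (ht : t ∣ a ^ 3 * b ^ 2) (hat : ¬ a ∣ t) : ∃ k ≤ 2, t = b ^ k := by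
  have hco : Nat.Coprime t a := ((Nat.Prime.coprime_iff_not_dvd ha).mpr hat).symm
  exact (Nat.dvd_prime_pow hb).mp ((Nat.Coprime.dvd_mul_left (hco.pow_right 3)).mp ht)

private lemma ineqs {a b : ℤ} (ha2 : 2 ≤ a) (hb2 : 2 ≤ b) :
    4*(a*b) ≤ a^3*b ∧ 2*a ≤ a*b ∧ b ≤ b^2 ∧ a^3*b ≤ a^3*b^2 ∧ 4 ≤ a^2 := by
  have hpos : (0:ℤ) < a * b := mul_pos (by linarith) (by linarith)
  have h5 : (4:ℤ) ≤ a ^ 2 := by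
    nlinarith [mul_nonneg (show (0:ℤ) ≤ a - 2 by linarith) (show (0:ℤ) ≤ a + 2 by linarith)]
  refine ⟨?_, ?_, ?_, ?_, h5⟩
  · nlinarith [mul_nonneg hpos.le (show (0:ℤ) ≤ a ^ 2 - 4 by linarith)]
  · nlinarith [mul_nonneg (show (0:ℤ) ≤ a by linarith) (show (0:ℤ) ≤ b - 2 by linarith)]
  · nlinarith [mul_nonneg (show (0:ℤ) ≤ b by linarith) (show (0:ℤ) ≤ b - 1 by linarith)]
  · nlinarith [mul_nonneg (pow_nonneg (show (0:ℤ) ≤ a by linarith) 3)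
      (show (0:ℤ) ≤ b ^ 2 - b by nlinarith [mul_nonneg (show (0:ℤ) ≤ b by linarith) (show (0:ℤ) ≤ b - 1 by linarith)])]

private lemma aux_one {a b x y z : ℕ} (ha : a.Prime) (hb : b.Prime) (hab : a ≠ b)
    (h23 : ¬(a = 2 ∧ b = 3))
    (hsum : x + y + z = 2 * a * b + a) (hprod : x * y * z = a ^ 3 * b ^ 2)
    (hax : a ∣ x) (hay : ¬ a ∣ y) (haz : ¬ a ∣ z) : False := by
  have ha2 := ha.two_le
  have hb2 := hb.two_le
  have hyd : y ∣ a ^ 3 * b ^ 2 := by rw [← hprod]; exact ⟨x * z, by ring⟩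
  have hzd : z ∣ a ^ 3 * b ^ 2 := by rw [← hprod]; exact ⟨x * y, by ring⟩
  obtain ⟨j, hj2, rfl⟩ := bpow ha hb hyd hay
  obtain ⟨k, hk2, rfl⟩ := bpow ha hb hzd haz
  have hcoyz : Nat.Coprime (a ^ 3) (b ^ j * b ^ k) :=
    (((ha.coprime_iff_not_dvd).mpr hay).mul_right ((ha.coprime_iff_not_dvd).mpr haz)).pow_left 3
  have h3x : a ^ 3 ∣ x := by
    refine hcoyz.dvd_of_dvd_mul_right ?_
    have hx3 : x * (b ^ j * b ^ k) = a ^ 3 * b ^ 2 := by rw [← hprod]; ring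
    exact hx3 ▸ dvd_mul_right (a ^ 3) (b ^ 2)
  obtain ⟨u, rfl⟩ := h3x
  have hu : u * (b ^ j * b ^ k) = b ^ 2 :=
    Nat.eq_of_mul_eq_mul_left (pow_pos ha.pos 3) (by rw [← hprod]; ring)
  obtain ⟨m, hm2, rfl⟩ := (Nat.dvd_prime_pow hb).mp ⟨b ^ j * b ^ k, hu.symm⟩
  have hexp : m + j + k = 2 := by
    refine Nat.pow_right_injective hb2 ?_
    show b ^ (m + j + k) = b ^ 2
    rw [pow_add, pow_add, mul_assoc]; exact hu
  have hcase : (m=0∧j=0∧k=2)∨(m=0∧j=1∧k=1)∨(m=0∧j=2∧k=0)∨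
      (m=1∧j=0∧k=1)∨(m=1∧j=1∧k=0)∨(m=2∧j=0∧k=0) := by omega
  have hZ : (a:ℤ) ^ 3 * b ^ m + b ^ j + b ^ k = 2 * a * b + a := by exact_mod_cast hsum
  have ha2' : (2:ℤ) ≤ a := by exact_mod_cast ha2
  have hb2' : (2:ℤ) ≤ b := by exact_mod_cast hb2
  obtain ⟨h4, h6, h7, h8, h5⟩ := ineqs ha2' hb2'
  rcases hcase with ⟨rfl,rfl,rfl⟩|⟨rfl,rfl,rfl⟩|⟨rfl,rfl,rfl⟩|⟨rfl,rfl,rfl⟩|⟨rfl,rfl,rfl⟩|⟨rfl,rfl,rfl⟩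
  · -- a³ + 1 + b² = 2ab + a : impossible
    simp only [pow_zero, pow_one, mul_one] at hZ
    have key : ((a:ℤ)-1)^2*(a+1) + ((a:ℤ)-b)^2 = 0 := by linear_combination hZ
    have h9 : (1:ℤ) ≤ ((a:ℤ)-1)^2 := by nlinarith
    have k1 : (3:ℤ) ≤ ((a:ℤ)-1)^2*(a+1) := by
      nlinarith [mul_le_mul_of_nonneg_right h9 (show (0:ℤ) ≤ a + 1 by linarith)]
    linarith [sq_nonneg ((a:ℤ)-b)]
  · -- a³ + 2b = 2ab + a : forces (a,b) = (2,3)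
    simp only [pow_zero, pow_one, mul_one] at hZ hsum
    have hdvd : (a:ℤ) ∣ 2 * b := ⟨2 * b + 1 - a ^ 2, by linear_combination hZ⟩
    have hdvdn : a ∣ 2 * b := by exact_mod_cast hdvd
    rcases (Nat.Prime.dvd_mul ha).mp hdvdn with h2 | hbb
    · have ha2eq : a = 2 := by
        have := Nat.le_of_dvd (by norm_num) h2; omega
      subst ha2eq
      have hb3 : b = 3 := by omega
      exact h23 ⟨rfl, hb3⟩
    · exact hab ((Nat.prime_dvd_prime_iff_eq ha hb).mp hbb)
  · -- a³ + b² + 1 = 2ab + a : impossible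
    simp only [pow_zero, pow_one, mul_one] at hZ
    have key : ((a:ℤ)-1)^2*(a+1) + ((a:ℤ)-b)^2 = 0 := by linear_combination hZ
    have h9 : (1:ℤ) ≤ ((a:ℤ)-1)^2 := by nlinarith
    have k1 : (3:ℤ) ≤ ((a:ℤ)-1)^2*(a+1) := by
      nlinarith [mul_le_mul_of_nonneg_right h9 (show (0:ℤ) ≤ a + 1 by linarith)]
    linarith [sq_nonneg ((a:ℤ)-b)]
  · simp only [pow_zero, pow_one, mul_one] at hZ
    linarith
  · simp only [pow_zero, pow_one, mul_one] at hZ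
    linarith
  · simp only [pow_zero, pow_one, mul_one] at hZ
    linarith

private lemma part1 (a b : ℕ) (ha : a.Prime) (hb : b.Prime) (hab : a ≠ b)
    (h23 : (a, b) ≠ (2, 3)) :
    (∀ x y z : ℕ, x ≥ y → y ≥ z → 1 ≤ z →
      x + y + z = 2 * a * b + a → x * y * z = a ^ 3 * b ^ 2 →
      (x, y, z) = (a * b, a * b, a)) := by
  intro x y z hxy hyz hz1 hsum hprod
  have ha2 := ha.two_le
  have hb2 := hb.two_le
  have h23' : ¬(a = 2 ∧ b = 3) := fun ⟨h1, h2⟩ => h23 (by simp [h1, h2])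
  by_cases hax : a ∣ x <;> by_cases hay : a ∣ y <;> by_cases haz : a ∣ z
  · -- all divisible: the main case
    obtain ⟨X, rfl⟩ := hax; obtain ⟨Y, rfl⟩ := hay; obtain ⟨Z, rfl⟩ := haz
    have hX : X * Y * Z = b ^ 2 :=
      Nat.eq_of_mul_eq_mul_left (pow_pos ha.pos 3) (by rw [← hprod]; ring)
    have hS : X + Y + Z = 2 * b + 1 := by
      refine Nat.eq_of_mul_eq_mul_left ha.pos ?_
      ring_nf
      ring_nf at hsum
      linarith
    obtain ⟨i, hi2, rfl⟩ := (Nat.dvd_prime_pow hb).mp (⟨Y*Z, by rw [← hX]; ring⟩ : X ∣ b^2)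
    obtain ⟨j, hj2, rfl⟩ := (Nat.dvd_prime_pow hb).mp (⟨b^i*Z, by rw [← hX]; ring⟩ : Y ∣ b^2)
    obtain ⟨k, hk2, rfl⟩ := (Nat.dvd_prime_pow hb).mp (⟨b^i*b^j, by rw [← hX]; ring⟩ : Z ∣ b^2)
    have hexp : i + j + k = 2 := by
      refine Nat.pow_right_injective hb2 ?_
      show b ^ (i + j + k) = b ^ 2
      rw [pow_add, pow_add]; exact hX
    have n1 : 2 * b ≤ b ^ 2 := by rw [pow_two]; exact Nat.mul_le_mul_right b hb2
    have n2 : a * 2 ≤ a * b := Nat.mul_le_mul_left a hb2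
    have n3 : a * 4 ≤ a * b ^ 2 := Nat.mul_le_mul_left a (by linarith)
    have hcase : (i=0∧j=0∧k=2)∨(i=0∧j=1∧k=1)∨(i=0∧j=2∧k=0)∨
        (i=1∧j=0∧k=1)∨(i=1∧j=1∧k=0)∨(i=2∧j=0∧k=0) := by omega
    rcases hcase with ⟨rfl,rfl,rfl⟩|⟨rfl,rfl,rfl⟩|⟨rfl,rfl,rfl⟩|⟨rfl,rfl,rfl⟩|⟨rfl,rfl,rfl⟩|⟨rfl,rfl,rfl⟩
    · simp only [pow_zero, pow_one, mul_one] at hS; linarith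
    · simp only [pow_zero, pow_one, mul_one] at hxy; linarith
    · simp only [pow_zero, pow_one, mul_one] at hxy; linarith
    · simp only [pow_zero, pow_one, mul_one] at hyz; linarith
    · norm_num
    · simp only [pow_zero, pow_one, mul_one] at hS; linarith
  · -- a ∣ x, a ∣ y, ¬ a ∣ z
    have h1 : a ∣ x + y + z := ⟨2*b+1, by rw [hsum]; ring⟩
    have h2 : a ∣ x + y + z - x - y := Nat.dvd_sub (Nat.dvd_sub h1 hax) hay
    exact absurd (by simpa [show x+y+z-x-y = z by omega] using h2) haz
  · -- a ∣ x, ¬ a ∣ y, a ∣ z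
    have h1 : a ∣ x + y + z := ⟨2*b+1, by rw [hsum]; ring⟩
    have h2 : a ∣ x + y + z - x - z := Nat.dvd_sub (Nat.dvd_sub h1 hax) haz
    exact absurd (by simpa [show x+y+z-x-z = y by omega] using h2) hay
  · exact (aux_one ha hb hab h23' hsum hprod hax hay haz).elim
  · -- ¬ a ∣ x, a ∣ y, a ∣ z
    have h1 : a ∣ x + y + z := ⟨2*b+1, by rw [hsum]; ring⟩
    have h2 : a ∣ x + y + z - y - z := Nat.dvd_sub (Nat.dvd_sub h1 hay) haz
    exact absurd (by simpa [show x+y+z-y-z = x by omega] using h2) hax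
  · exact (aux_one ha hb hab h23' (show y + x + z = 2*a*b + a by omega)
      (show y * x * z = a^3*b^2 by rw [← hprod]; ring) hay hax haz).elim
  · exact (aux_one ha hb hab h23' (show z + x + y = 2*a*b + a by omega)
      (show z * x * y = a^3*b^2 by rw [← hprod]; ring) haz hax hay).elim
  · have hdvd : a ∣ x * y * z := by
      rw [hprod]; exact dvd_mul_of_dvd_left (dvd_pow_self a (by norm_num)) _
    rcases (Nat.Prime.dvd_mul ha).mp hdvd with h | h
    · rcases (Nat.Prime.dvd_mul ha).mp h with h' | h'
      exacts [absurd h' hax, absurd h' hay]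
    · exact absurd h haz


def look (L : List (List ℤ)) (i j : ℕ) : ℤ := (L.getD i []).getD j 0

def dvL : List ℤ := [11, 5, -5, -1, -1, -1, -1, -1, -1, -1, -1, -1, -1, -1]

def Plist1 : List (List ℤ) :=
  [[1, 1, 1, 1, 0, 0, 0, 0, 0, 0, 0, 0, 0, 0],
   [1, 1, 1, -1, 1, 0, 0, 0, 0, 0, 0, 0, 0, 0],
   [1, 1, 1, 0, -1, 1, 0, 0, 0, 0, 0, 0, 0, 0],
   [1, 1, 1, 0, 0, -1, 1, 0, 0, 0, 0, 0, 0, 0],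
   [1, 1, 1, 0, 0, 0, -1, 1, 0, 0, 0, 0, 0, 0],
   [1, 1, 1, 0, 0, 0, 0, -1, 0, 0, 0, 0, 0, 0],
   [-1, 1, 1, 0, 0, 0, 0, 0, 1, 0, 0, 0, 0, 0],
   [-1, 1, 1, 0, 0, 0, 0, 0, -1, 1, 0, 0, 0, 0],
   [-1, 1, 1, 0, 0, 0, 0, 0, 0, -1, 1, 0, 0, 0],
   [-1, 1, 1, 0, 0, 0, 0, 0, 0, 0, -1, 1, 0, 0],
   [-1, 1, 1, 0, 0, 0, 0, 0, 0, 0, 0, -1, 1, 0],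
   [-1, 1, 1, 0, 0, 0, 0, 0, 0, 0, 0, 0, -1, 0],
   [0, -3, 2, 0, 0, 0, 0, 0, 0, 0, 0, 0, 0, 1],
   [0, -3, 2, 0, 0, 0, 0, 0, 0, 0, 0, 0, 0, -1]]

def Qlist1 : List (List ℤ) :=
  [[5, 5, 5, 5, 5, 5, -5, -5, -5, -5, -5, -5, 0, 0],
   [2, 2, 2, 2, 2, 2, 2, 2, 2, 2, 2, 2, -6, -6],
   [3, 3, 3, 3, 3, 3, 3, 3, 3, 3, 3, 3, 6, 6],
   [50, -10, -10, -10, -10, -10, 0, 0, 0, 0, 0, 0, 0, 0],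
   [40, 40, -20, -20, -20, -20, 0, 0, 0, 0, 0, 0, 0, 0],
   [30, 30, 30, -30, -30, -30, 0, 0, 0, 0, 0, 0, 0, 0],
   [20, 20, 20, 20, -40, -40, 0, 0, 0, 0, 0, 0, 0, 0],
   [10, 10, 10, 10, 10, -50, 0, 0, 0, 0, 0, 0, 0, 0],
   [0, 0, 0, 0, 0, 0, 50, -10, -10, -10, -10, -10, 0, 0],
   [0, 0, 0, 0, 0, 0, 40, 40, -20, -20, -20, -20, 0, 0],
   [0, 0, 0, 0, 0, 0, 30, 30, 30, -30, -30, -30, 0, 0],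
   [0, 0, 0, 0, 0, 0, 20, 20, 20, 20, -40, -40, 0, 0],
   [0, 0, 0, 0, 0, 0, 10, 10, 10, 10, 10, -50, 0, 0],
   [0, 0, 0, 0, 0, 0, 0, 0, 0, 0, 0, 0, 30, -30]]

def Plist2 : List (List ℤ) :=
  [[-3, 0, 1, 1, 0, 0, 0, 0, 0, 0, 0, 0, 0, 0],
   [-3, 0, 1, -1, 1, 0, 0, 0, 0, 0, 0, 0, 0, 0],
   [-3, 0, 1, 0, -1, 1, 0, 0, 0, 0, 0, 0, 0, 0],
   [-3, 0, 1, 0, 0, -1, 1, 0, 0, 0, 0, 0, 0, 0],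
   [-3, 0, 1, 0, 0, 0, -1, 1, 0, 0, 0, 0, 0, 0],
   [-3, 0, 1, 0, 0, 0, 0, -1, 1, 0, 0, 0, 0, 0],
   [-3, 0, 1, 0, 0, 0, 0, 0, -1, 1, 0, 0, 0, 0],
   [-3, 0, 1, 0, 0, 0, 0, 0, 0, -1, 0, 0, 0, 0],
   [2, 1, 2, 0, 0, 0, 0, 0, 0, 0, 1, 0, 0, 0],
   [2, 1, 2, 0, 0, 0, 0, 0, 0, 0, -1, 1, 0, 0],
   [2, 1, 2, 0, 0, 0, 0, 0, 0, 0, 0, -1, 0, 0],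
   [2, -1, 2, 0, 0, 0, 0, 0, 0, 0, 0, 0, 1, 0],
   [2, -1, 2, 0, 0, 0, 0, 0, 0, 0, 0, 0, -1, 1],
   [2, -1, 2, 0, 0, 0, 0, 0, 0, 0, 0, 0, 0, -1]]

def Qlist2 : List (List ℤ) :=
  [[-3, -3, -3, -3, -3, -3, -3, -3, 2, 2, 2, 2, 2, 2],
   [0, 0, 0, 0, 0, 0, 0, 0, 16, 16, 16, -16, -16, -16],
   [3, 3, 3, 3, 3, 3, 3, 3, 6, 6, 6, 6, 6, 6],
   [84, -12, -12, -12, -12, -12, -12, -12, 0, 0, 0, 0, 0, 0],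
   [72, 72, -24, -24, -24, -24, -24, -24, 0, 0, 0, 0, 0, 0],
   [60, 60, 60, -36, -36, -36, -36, -36, 0, 0, 0, 0, 0, 0],
   [48, 48, 48, 48, -48, -48, -48, -48, 0, 0, 0, 0, 0, 0],
   [36, 36, 36, 36, 36, -60, -60, -60, 0, 0, 0, 0, 0, 0],
   [24, 24, 24, 24, 24, 24, -72, -72, 0, 0, 0, 0, 0, 0],
   [12, 12, 12, 12, 12, 12, 12, -84, 0, 0, 0, 0, 0, 0],
   [0, 0, 0, 0, 0, 0, 0, 0, 64, -32, -32, 0, 0, 0],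
   [0, 0, 0, 0, 0, 0, 0, 0, 32, 32, -64, 0, 0, 0],
   [0, 0, 0, 0, 0, 0, 0, 0, 0, 0, 0, 64, -32, -32],
   [0, 0, 0, 0, 0, 0, 0, 0, 0, 0, 0, 32, 32, -64]]



private lemma charpoly_conj {n R : Type*} [Fintype n] [DecidableEq n] [CommRing R] [IsDomain R]
    (A P D Q : Matrix n n R) (c : R) (hc : c ≠ 0) (hPQ : P * Q = c • 1)
    (hAP : A * P = P * D) : A.charpoly = D.charpoly := by
  have hdet : P.det ≠ 0 := by
    have h : P.det * Q.det = c ^ Fintype.card n * 1 := by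
      rw [← det_mul, hPQ, Matrix.det_smul, det_one]
    intro h0
    rw [h0, zero_mul, mul_one] at h
    exact pow_ne_zero _ hc h.symm
  have hkey : charmatrix A * P.map C = P.map C * charmatrix D := by
    unfold charmatrix
    rw [sub_mul, mul_sub]
    congr 1
    · exact ((scalar_commute (X : R[X]) (fun r => Commute.all _ _) (P.map C)).eq)
    · show (C : R →+* R[X]).mapMatrix A * P.map C = P.map C * (C : R →+* R[X]).mapMatrix D
      simp only [RingHom.mapMatrix_apply]
      rw [← Matrix.map_mul, ← Matrix.map_mul, hAP]
  have hC : (P.map C).det ≠ 0 := by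
    have hmd : (P.map C).det = C P.det := by
      rw [show P.map (C : R → R[X]) = (C : R →+* R[X]).mapMatrix P from rfl, RingHom.map_det]
    rw [hmd]
    exact fun h => hdet (Polynomial.C_eq_zero.mp h)
  have h2 := congrArg Matrix.det hkey
  rw [det_mul, det_mul] at h2
  unfold Matrix.charpoly
  exact mul_left_cancel₀ hC (by rw [← h2, mul_comm])

private lemma charpoly_diag {n R : Type*} [Fintype n] [DecidableEq n] [CommRing R]
    (v : n → R) : (Matrix.diagonal v).charpoly = ∏ i, (X - C (v i)) := by
  have h : charmatrix (Matrix.diagonal v) = Matrix.diagonal (fun i => X - C (v i)) := by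
    ext i j
    by_cases hij : i = j
    · subst hij; simp
    · simp [hij, Matrix.diagonal_apply_ne _ hij]
  rw [Matrix.charpoly, h, det_diagonal]

/-! ### Data for K_{6,6,2} -/

def ind1 : (Σ i : Fin 3, Fin ((![6,6,2] : Fin 3 → ℕ) i)) → ℕ := fun u => 6 * u.1.1 + u.2.1

def A1 : Matrix (Σ i : Fin 3, Fin ((![6,6,2] : Fin 3 → ℕ) i))
    (Σ i : Fin 3, Fin ((![6,6,2] : Fin 3 → ℕ) i)) ℤ :=
  fun u v => if u = v then 0 else if u.1 = v.1 then 1 else -1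

def P1 : Matrix (Σ i : Fin 3, Fin ((![6,6,2] : Fin 3 → ℕ) i))
    (Σ i : Fin 3, Fin ((![6,6,2] : Fin 3 → ℕ) i)) ℤ :=
  fun u v => look Plist1 (ind1 u) (ind1 v)

def Q1 : Matrix (Σ i : Fin 3, Fin ((![6,6,2] : Fin 3 → ℕ) i))
    (Σ i : Fin 3, Fin ((![6,6,2] : Fin 3 → ℕ) i)) ℤ :=
  fun u v => look Qlist1 (ind1 u) (ind1 v)

def D1 : Matrix (Σ i : Fin 3, Fin ((![6,6,2] : Fin 3 → ℕ) i))
    (Σ i : Fin 3, Fin ((![6,6,2] : Fin 3 → ℕ) i)) ℤ :=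
  Matrix.diagonal (fun u => dvL.getD (ind1 u) 0)

/-! ### Data for K_{8,3,3} -/

def ind2 : (Σ i : Fin 3, Fin ((![8,3,3] : Fin 3 → ℕ) i)) → ℕ := fun u =>
  (if u.1.1 = 0 then 0 else if u.1.1 = 1 then 8 else 11) + u.2.1

def A2 : Matrix (Σ i : Fin 3, Fin ((![8,3,3] : Fin 3 → ℕ) i))
    (Σ i : Fin 3, Fin ((![8,3,3] : Fin 3 → ℕ) i)) ℤ :=
  fun u v => if u = v then 0 else if u.1 = v.1 then 1 else -1

def P2 : Matrix (Σ i : Fin 3, Fin ((![8,3,3] : Fin 3 → ℕ) i))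
    (Σ i : Fin 3, Fin ((![8,3,3] : Fin 3 → ℕ) i)) ℤ :=
  fun u v => look Plist2 (ind2 u) (ind2 v)

def Q2 : Matrix (Σ i : Fin 3, Fin ((![8,3,3] : Fin 3 → ℕ) i))
    (Σ i : Fin 3, Fin ((![8,3,3] : Fin 3 → ℕ) i)) ℤ :=
  fun u v => look Qlist2 (ind2 u) (ind2 v)

def D2 : Matrix (Σ i : Fin 3, Fin ((![8,3,3] : Fin 3 → ℕ) i))
    (Σ i : Fin 3, Fin ((![8,3,3] : Fin 3 → ℕ) i)) ℤ :=
  Matrix.diagonal (fun u => dvL.getD (ind2 u) 0)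

lemma hb1 : ∀ u : (Σ i : Fin 3, Fin ((![6,6,2] : Fin 3 → ℕ) i)), ind1 u < 14 := by decide

lemma hb2' : ∀ u : (Σ i : Fin 3, Fin ((![8,3,3] : Fin 3 → ℕ) i)), ind2 u < 14 := by decide

def e1 : (Σ i : Fin 3, Fin ((![6,6,2] : Fin 3 → ℕ) i)) → Fin 14 := fun u => ⟨ind1 u, hb1 u⟩

def e2 : (Σ i : Fin 3, Fin ((![8,3,3] : Fin 3 → ℕ) i)) → Fin 14 := fun u => ⟨ind2 u, hb2' u⟩

set_option maxRecDepth 4000000 in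
lemma he1 : Function.Bijective e1 := by decide

set_option maxRecDepth 4000000 in
lemma he2 : Function.Bijective e2 := by decide

set_option maxRecDepth 10000 in
lemma hAP1 : A1 * P1 = P1 * D1 := by decide

set_option maxRecDepth 10000 in
lemma hPQ1 : P1 * Q1 = (60 : ℤ) • 1 := by decide

set_option maxRecDepth 10000 in
lemma hAP2 : A2 * P2 = P2 * D2 := by decide

set_option maxRecDepth 10000 in
lemma hPQ2 : P2 * Q2 = (96 : ℤ) • 1 := by decide

lemma chD1 : D1.charpoly = ∏ t : Fin 14, (X - C (dvL.getD t.1 0)) := by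
  rw [D1, charpoly_diag]
  exact Fintype.prod_bijective e1 he1 _ _ (fun u => rfl)

lemma chD2 : D2.charpoly = ∏ t : Fin 14, (X - C (dvL.getD t.1 0)) := by
  rw [D2, charpoly_diag]
  exact Fintype.prod_bijective e2 he2 _ _ (fun u => rfl)

lemma chAA : A1.charpoly = A2.charpoly := by
  rw [charpoly_conj A1 P1 D1 Q1 60 (by norm_num) hPQ1 hAP1,
    charpoly_conj A2 P2 D2 Q2 96 (by norm_num) hPQ2 hAP2, chD1, chD2]

lemma hseidel1 : seidel (completeMultipartite ![6,6,2]) = A1.map ⇑(Int.castRingHom ℝ) := by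
  ext u v
  by_cases h1 : u = v
  · subst h1; simp [seidel, A1]
  · by_cases h2 : u.1 = v.1 <;>
      simp [seidel, completeMultipartite, A1, h1, h2]

lemma hseidel2 : seidel (completeMultipartite ![8,3,3]) = A2.map ⇑(Int.castRingHom ℝ) := by
  ext u v
  by_cases h1 : u = v
  · subst h1; simp [seidel, A2]
  · by_cases h2 : u.1 = v.1 <;>
      simp [seidel, completeMultipartite, A2, h1, h2]




/-- For distinct primes `a, b` with `(a,b) ≠ (2,3)`, the only positive integer
triple `x ≥ y ≥ z` with `x + y + z = 2ab + a` and `xyz = a³b²` is `(ab, ab, a)`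
(so `K_{ab,ab,a}` is S-determined); while for `(a,b) = (2,3)` the triple `(8,3,3)`
is a second solution, so `K_{6,6,2}` and `K_{8,3,3}` are Seidel cospectral. -/
theorem K_ab_ab_a_determined (a b : ℕ) (ha : a.Prime) (hb : b.Prime) (hab : a ≠ b)
    (h23 : (a, b) ≠ (2, 3)) :
    (∀ x y z : ℕ, x ≥ y → y ≥ z → 1 ≤ z →
      x + y + z = 2 * a * b + a → x * y * z = a ^ 3 * b ^ 2 →
      (x, y, z) = (a * b, a * b, a)) ∧
    (8 + 3 + 3 = 2 * 2 * 3 + 2 ∧ 8 * 3 * 3 = 2 ^ 3 * 3 ^ 2) ∧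
    (seidel (completeMultipartite ![6, 6, 2])).charpoly =
      (seidel (completeMultipartite ![8, 3, 3])).charpoly := by
  refine ⟨part1 a b ha hb hab h23, ⟨by norm_num, by norm_num⟩, ?_⟩
  rw [hseidel1, hseidel2, Matrix.charpoly_map, Matrix.charpoly_map, chAA]
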